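/- Under ho-MCAR masking (P ∼ Bernoulli(ρ)^{⊗d} independent of X) with Σ_imp := E[(P⊙X)(P⊙X)ᵀ] = Σ_P ⊙ Σ where Σ_P = E[PPᵀ], every eigenvalue of Σ_imp is at least ρ(1−ρ)·min_j E[X_j²]. Consequently, if E[X_j²] ≥ ℓ² for all j, then Σ_imp ⪰ ρ(1−ρ)ℓ² I. -/

import Mathlib

open Matrix

theorem stmt18 {d : ℕ} (hd : 0 < d)
    (ρ l : ℝ) (hρpos : 0 < ρ) (hρlt : ρ < 1)
    (Sig : Matrix (Fin d) (Fin d) ℝ) (hSig : Sig.PosSemidef)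
    (SigP : Matrix (Fin d) (Fin d) ℝ)
    (hSigP : SigP = Matrix.of fun i j => if i = j then ρ else ρ ^ 2)
    (hl : ∀ j, l ^ 2 ≤ Sig j j) :
    (SigP.hadamard Sig -
        (ρ * (1 - ρ) * ⨅ j, Sig j j) • (1 : Matrix (Fin d) (Fin d) ℝ)).PosSemidef ∧
      (SigP.hadamard Sig -
        (ρ * (1 - ρ) * l ^ 2) • (1 : Matrix (Fin d) (Fin d) ℝ)).PosSemidef := by
  haveI : Nonempty (Fin d) := ⟨⟨0, hd⟩⟩
  set m : ℝ := ⨅ j, Sig j j with hm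
  have hbdd : BddBelow (Set.range fun j => Sig j j) := Set.Finite.bddBelow (Set.finite_range _)
  have hmle : ∀ j, m ≤ Sig j j := fun j => ciInf_le hbdd j
  have hlm : l ^ 2 ≤ m := le_ciInf hl
  have hρ1 : 0 ≤ ρ * (1 - ρ) := mul_nonneg hρpos.le (by linarith)
  have key : ∀ c : ℝ, c ≤ m →
      (SigP.hadamard Sig -
        (ρ * (1 - ρ) * c) • (1 : Matrix (Fin d) (Fin d) ℝ)).PosSemidef := by
    intro c hc
    have hdecomp : SigP.hadamard Sig - (ρ * (1 - ρ) * c) • (1 : Matrix (Fin d) (Fin d) ℝ) =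
        Matrix.diagonal (fun j => ρ * (1 - ρ) * (Sig j j - c)) + (ρ ^ 2) • Sig := by
      ext i j
      by_cases h : i = j
      · subst h
        simp [hSigP, Matrix.hadamard, Matrix.one_apply, Matrix.diagonal]
        ring
      · simp [hSigP, Matrix.hadamard, Matrix.one_apply, Matrix.diagonal, h]
    rw [hdecomp]
    have hsmul : ((ρ ^ 2 : ℝ) • Sig).PosSemidef := by
      refine Matrix.PosSemidef.of_dotProduct_mulVec_nonneg (by unfold Matrix.IsHermitian; rw [conjTranspose_smul, hSig.1.eq, star_trivial]) fun x => ?_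
      rw [Matrix.smul_mulVec, dotProduct_smul, smul_eq_mul]
      exact mul_nonneg (by positivity) (hSig.dotProduct_mulVec_nonneg x)
    refine Matrix.PosSemidef.add ?_ hsmul
    refine Matrix.posSemidef_diagonal_iff.2 fun j => ?_
    exact mul_nonneg hρ1 (by linarith [hmle j, hc])
  exact ⟨key m le_rfl, key (l ^ 2) hlm⟩
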